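/- arXiv:2401.11465 — 6 statements merged into one kernel-verified Lean document; each statement's English description precedes it below -/
import Mathlib

section
/- On [0,1]×[0,+∞], the operation (d1,m1)+(d2,m2) = (max(d1,d2), Σ_{i : d_i = max(d1,d2)} m_i) (i.e. (d2,m2) if d1 < d2, (d1,m1) if d2 < d1, and (d1, m1+m2) if d1 = d2) is commutative, associative, has identity element (0,0), and is continuous with respect to the order topology of the lexicographic order; hence ⟨[0,1]×[0,+∞]; +⟩ is a topological commutative monoid. -/
/- STATEMENT 1: On [0,1]×[0,+∞], the addition
   (d1,m1)+(d2,m2) = (d2,m2) if d1<d2, (d1,m1) if d2<d1, (d1,m1+m2) if d1=d2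
   is commutative, associative, has identity (0,0), and is continuous for the
   order topology of the lexicographic order: a topological commutative monoid. -/

open scoped ENNReal
open Topology

/-- The interval [0,1] as a subtype of ℝ. -/
abbrev UnitInterval' : Type := ↥(Set.Icc (0:ℝ) 1)

/-- The pair addition: the pair with the larger first coordinate wins; if the first
coordinates agree, the second coordinates are added. -/
noncomputable def pAdd {α β : Type*} [LinearOrder α] [Add β] (a b : α × β) : α × β :=
  if a.1 < b.1 then b else if b.1 < a.1 then a else (a.1, a.2 + b.2)

/-- The pair (0,0) in [0,1]×[0,+∞]. -/
noncomputable def pZero : UnitInterval' × ℝ≥0∞ := (⟨0, by norm_num⟩, 0)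

/-- The order topology on [0,1]×[0,+∞] with the lexicographic order. -/
noncomputable instance : TopologicalSpace (Lex (UnitInterval' × ℝ≥0∞)) :=
  Preorder.topology _

section basic
variable {α β : Type*} [LinearOrder α] [Add β]

lemma pAdd_eq_right {a b : α × β} (h : a.1 < b.1) : pAdd a b = b := if_pos h

lemma pAdd_eq_left {a b : α × β} (h : b.1 < a.1) : pAdd a b = a := by
  unfold pAdd; rw [if_neg (lt_asymm h), if_pos h]

lemma pAdd_eq_add {a b : α × β} (h : a.1 = b.1) : pAdd a b = (a.1, a.2 + b.2) := by
  unfold pAdd; rw [if_neg (h ▸ lt_irrefl _), if_neg (h ▸ lt_irrefl _)]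

lemma pAdd_fst (a b : α × β) : (pAdd a b).1 = max a.1 b.1 := by
  rcases lt_trichotomy a.1 b.1 with h | h | h
  · rw [pAdd_eq_right h, max_eq_right h.le]
  · rw [pAdd_eq_add h, max_eq_left h.ge]
  · rw [pAdd_eq_left h, max_eq_left h.le]

end basic

lemma pAdd_assoc' {α β : Type*} [LinearOrder α] [AddSemigroup β] (a b c : α × β) :
    pAdd (pAdd a b) c = pAdd a (pAdd b c) := by
  rcases lt_trichotomy a.1 b.1 with h1 | h1 | h1 <;>
    rcases lt_trichotomy b.1 c.1 with h2 | h2 | h2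
  · rw [pAdd_eq_right h1, pAdd_eq_right h2, pAdd_eq_right (h1.trans h2)]
  · rw [pAdd_eq_right h1, pAdd_eq_add h2,
      pAdd_eq_right (a := a) (b := (b.1, b.2 + c.2)) h1]
  · rw [pAdd_eq_right h1, pAdd_eq_left h2, pAdd_eq_right h1]
  · rw [pAdd_eq_add h1,
      pAdd_eq_right (a := (a.1, a.2 + b.2)) (b := c) (h1.trans_lt h2),
      pAdd_eq_right h2, pAdd_eq_right (h1.trans_lt h2)]
  · rw [pAdd_eq_add h1, pAdd_eq_add h2,
      pAdd_eq_add (a := (a.1, a.2 + b.2)) (b := c) (h1.trans h2),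
      pAdd_eq_add (a := a) (b := (b.1, b.2 + c.2)) h1, add_assoc]
  · rw [pAdd_eq_add h1,
      pAdd_eq_left (a := (a.1, a.2 + b.2)) (b := c) (h2.trans_eq h1.symm),
      pAdd_eq_left h2, pAdd_eq_add h1]
  · rw [pAdd_eq_left h1, pAdd_eq_right h2]
  · rw [pAdd_eq_left h1, pAdd_eq_add h2,
      pAdd_eq_left (a := a) (b := (b.1, b.2 + c.2)) h1,
      pAdd_eq_left (h2.symm.trans_lt h1)]
  · rw [pAdd_eq_left h1, pAdd_eq_left h2, pAdd_eq_left (h2.trans h1), pAdd_eq_left h1]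

lemma pAdd_comm' {α β : Type*} [LinearOrder α] [AddCommMonoid β] (a b : α × β) :
    pAdd a b = pAdd b a := by
  rcases lt_trichotomy a.1 b.1 with h | h | h
  · rw [pAdd_eq_right h, pAdd_eq_left h]
  · rw [pAdd_eq_add h, pAdd_eq_add h.symm, h, add_comm]
  · rw [pAdd_eq_left h, pAdd_eq_right h]

instance : OrderTopology (Lex (UnitInterval' × ℝ≥0∞)) := ⟨rfl⟩

abbrev LL := Lex (UnitInterval' × ℝ≥0∞)

lemma lexlt {p q : UnitInterval' × ℝ≥0∞} :
    toLex p < toLex q ↔ p.1 < q.1 ∨ p.1 = q.1 ∧ p.2 < q.2 := Prod.Lex.lt_iff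

-- test elaboration details
example (x : LL) (d : UnitInterval') (m : ℝ≥0∞) (h : toLex (d, m) < x) :
    d < (ofLex x).1 ∨ d = (ofLex x).1 ∧ m < (ofLex x).2 :=
  (lexlt (q := ofLex x)).mp h

example (x : LL) (d : UnitInterval') (m : ℝ≥0∞) (h : d < (ofLex x).1) :
    x ∈ Set.Ioi (toLex (d, m)) := (lexlt (q := ofLex x)).mpr (Or.inl h)

lemma lexle {p q : UnitInterval' × ℝ≥0∞} :
    toLex p ≤ toLex q ↔ p.1 < q.1 ∨ p.1 = q.1 ∧ p.2 ≤ q.2 := Prod.Lex.le_iff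

section keylems
variable {d : UnitInterval'} {m p q : ℝ≥0∞}

/-- If max of first coords exceeds `d`, the sum is above `(d,m)`. -/
lemma mem_gt_of_fst {a b : UnitInterval' × ℝ≥0∞} (h : d < a.1 ∨ d < b.1) :
    toLex (d, m) < toLex (pAdd a b) :=
  lexlt.mpr (Or.inl (by rw [pAdd_fst]; exact lt_max_iff.mpr h))

lemma mem_gt_of_snd {a b : UnitInterval' × ℝ≥0∞} (ha : a.1 = d) (hb : b.1 = d)
    (h : m < a.2 + b.2) : toLex (d, m) < toLex (pAdd a b) := by
  rw [pAdd_eq_add (ha.trans hb.symm)]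
  exact lexlt.mpr (Or.inr ⟨ha.symm, h⟩)

/-- one-sided key lemma for `Ioi`. -/
lemma key_gt {x' y' : LL} (hx' : toLex (d, m) < x') :
    toLex (d, m) < toLex (pAdd (ofLex x') (ofLex y')) := by
  rcases (lexlt (q := ofLex x')).mp hx' with h1 | ⟨h1, h2⟩
  · exact mem_gt_of_fst (Or.inl h1)
  · rcases lt_trichotomy (ofLex y').1 (ofLex x').1 with h3 | h3 | h3
    · rw [pAdd_eq_left h3]; exact hx'
    · exact mem_gt_of_snd h1.symm (h3.trans h1.symm) (h2.trans_le le_self_add)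
    · exact mem_gt_of_fst (Or.inr (h1.trans_lt h3))

lemma key_gt' {x' y' : LL} (hy' : toLex (d, m) < y') :
    toLex (d, m) < toLex (pAdd (ofLex x') (ofLex y')) := by
  rw [pAdd_comm']; exact key_gt hy'

/-- two-sided key lemma for `Ioi`. -/
lemma mem_gt_both {x' y' : LL} (hpq : m ≤ p + q)
    (hx' : toLex (d, p) < x') (hy' : toLex (d, q) < y') :
    toLex (d, m) < toLex (pAdd (ofLex x') (ofLex y')) := by
  rcases (lexlt (q := ofLex x')).mp hx' with h1 | ⟨h1, h2⟩
  · exact mem_gt_of_fst (Or.inl h1)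
  rcases (lexlt (q := ofLex y')).mp hy' with h3 | ⟨h3, h4⟩
  · exact mem_gt_of_fst (Or.inr h3)
  exact mem_gt_of_snd h1.symm h3.symm (hpq.trans_lt (ENNReal.add_lt_add h2 h4))

/-- two-sided key lemma for `Iio`. -/
lemma mem_lt_both {x' y' : LL} (hp : p ≤ m) (hq : q ≤ m) (hpq : p + q ≤ m)
    (hx' : x' < toLex (d, p)) (hy' : y' < toLex (d, q)) :
    toLex (pAdd (ofLex x') (ofLex y')) < toLex (d, m) := by
  rcases (lexlt (p := ofLex x')).mp hx' with h1 | ⟨h1, h2⟩ <;>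
    rcases (lexlt (p := ofLex y')).mp hy' with h3 | ⟨h3, h4⟩
  · exact lexlt.mpr (Or.inl (by rw [pAdd_fst]; exact max_lt h1 h3))
  · rw [pAdd_eq_right (h3 ▸ h1 : (ofLex x').1 < (ofLex y').1)]
    exact lexlt.mpr (Or.inr ⟨h3, h4.trans_le hq⟩)
  · rw [pAdd_eq_left (h1 ▸ h3 : (ofLex y').1 < (ofLex x').1)]
    exact lexlt.mpr (Or.inr ⟨h1, h2.trans_le hp⟩)
  · rw [pAdd_eq_add (h1.trans h3.symm)]
    exact lexlt.mpr (Or.inr ⟨h1, (ENNReal.add_lt_add h2 h4).trans_le hpq⟩)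

end keylems

lemma aux_gt (d : UnitInterval') (m : ℝ≥0∞) :
    IsOpen ((fun p : LL × LL => toLex (pAdd (ofLex p.1) (ofLex p.2))) ⁻¹'
      Set.Ioi (toLex (d, m))) := by
  rw [isOpen_iff_mem_nhds]
  rintro ⟨x, y⟩ h
  simp only [Set.mem_preimage, Set.mem_Ioi] at h
  by_cases hx : toLex (d, m) < x
  · refine Filter.mem_of_superset
      (prod_mem_nhds (isOpen_Ioi.mem_nhds hx) Filter.univ_mem) ?_
    rintro ⟨x', y'⟩ ⟨hx', -⟩
    exact key_gt hx'
  by_cases hy : toLex (d, m) < y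
  · refine Filter.mem_of_superset
      (prod_mem_nhds Filter.univ_mem (isOpen_Ioi.mem_nhds hy)) ?_
    rintro ⟨x', y'⟩ ⟨-, hy'⟩
    exact key_gt' hy'
  -- hard case
  set a := ofLex x with ha
  set b := ofLex y with hb
  rcases (lexle (p := a)).mp (not_lt.mp hx) with hA | ⟨hA1, hA2⟩
  · -- a.1 < d : then the sum must win through b, contradiction with ¬ hy
    exfalso
    apply hy
    rcases (lexlt (p := (d, m))).mp h with h1 | ⟨h1, h2⟩
    · rw [pAdd_fst] at h1
      rcases lt_max_iff.mp h1 with h1 | h1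
      · exact absurd h1 (not_lt.mpr hA.le)
      · exact lexlt.mpr (Or.inl h1)
    · rw [pAdd_fst] at h1
      -- d = max a.1 b.1, a.1 < d so max = b.1
      have hb1 : b.1 = d := by
        rcases max_cases a.1 b.1 with ⟨he, -⟩ | ⟨he, -⟩
        · exact absurd (he ▸ h1.symm) hA.ne
        · exact (he ▸ h1).symm
      have : pAdd a b = b := pAdd_eq_right (hA.trans_eq hb1.symm)
      rw [this] at h2
      exact lexlt.mpr (Or.inr ⟨hb1.symm, h2⟩)
  rcases (lexle (p := b)).mp (not_lt.mp hy) with hB | ⟨hB1, hB2⟩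
  · -- b.1 < d, a.1 = d, a.2 ≤ m : the sum is a, contradiction with h
    exfalso
    have : pAdd a b = a := pAdd_eq_left (hB.trans_eq hA1.symm)
    rw [this] at h
    rcases (lexlt (p := (d, m))).mp h with h1 | ⟨h1, h2⟩
    · exact absurd h1 (not_lt.mpr hA1.le)
    · exact absurd h2 (not_lt.mpr hA2)
  -- now a.1 = b.1 = d, a.2 ≤ m, b.2 ≤ m, and m < a.2 + b.2
  have hsum : m < a.2 + b.2 := by
    have : pAdd a b = (a.1, a.2 + b.2) := pAdd_eq_add (hA1.trans hB1.symm)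
    rw [this] at h
    rcases (lexlt (p := (d, m))).mp h with h1 | ⟨h1, h2⟩
    · exact absurd h1 (not_lt.mpr hA1.le)
    · exact h2
  have hm_top : m ≠ ⊤ := hsum.ne_top
  have ha_top : a.2 ≠ ⊤ := (hA2.trans_lt hm_top.lt_top).ne
  have hstep : m - a.2 < b.2 :=
    (ENNReal.sub_lt_iff_lt_right ha_top hA2).mpr (by rw [add_comm] at hsum; exact hsum)
  obtain ⟨q, hq1, hq2⟩ := exists_between hstep
  have hqm : q ≤ m := hq2.le.trans hB2
  have hq_top : q ≠ ⊤ := (hqm.trans_lt hm_top.lt_top).ne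
  have hp : m - q < a.2 := by
    rw [ENNReal.sub_lt_iff_lt_right hq_top hqm, add_comm]
    exact (ENNReal.sub_lt_iff_lt_right ha_top hA2).mp hq1
  have hpq : m - q + q = m := tsub_add_cancel_of_le hqm
  refine Filter.mem_of_superset
    (prod_mem_nhds
      (isOpen_Ioi.mem_nhds ((lexlt (p := (d, m - q)) (q := a)).mpr (Or.inr ⟨hA1.symm, hp⟩)))
      (isOpen_Ioi.mem_nhds ((lexlt (p := (d, q)) (q := b)).mpr (Or.inr ⟨hB1.symm, hq2⟩)))) ?_
  rintro ⟨x', y'⟩ ⟨hx', hy'⟩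
  exact mem_gt_both hpq.ge hx' hy'

lemma aux_lt (d : UnitInterval') (m : ℝ≥0∞) :
    IsOpen ((fun p : LL × LL => toLex (pAdd (ofLex p.1) (ofLex p.2))) ⁻¹'
      Set.Iio (toLex (d, m))) := by
  rw [isOpen_iff_mem_nhds]
  rintro ⟨x, y⟩ h
  simp only [Set.mem_preimage, Set.mem_Iio] at h
  set a := ofLex x with ha
  set b := ofLex y with hb
  have key : ∀ p q : ℝ≥0∞, p ≤ m → q ≤ m → p + q ≤ m →
      x < toLex (d, p) → y < toLex (d, q) →
      ((fun p : LL × LL => toLex (pAdd (ofLex p.1) (ofLex p.2))) ⁻¹'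
        Set.Iio (toLex (d, m))) ∈ 𝓝 (x, y) := by
    intro p q hp hq hpq hxm hym
    refine Filter.mem_of_superset
      (prod_mem_nhds (isOpen_Iio.mem_nhds hxm) (isOpen_Iio.mem_nhds hym)) ?_
    rintro ⟨x', y'⟩ ⟨hx', hy'⟩
    exact mem_lt_both hp hq hpq hx' hy'
  rcases (lexlt (p := pAdd a b) (q := (d, m))).mp h with h1 | ⟨h1, h2⟩
  · -- max a.1 b.1 < d
    rw [pAdd_fst] at h1
    exact key 0 0 zero_le zero_le (by simp)
      ((lexlt (p := a)).mpr (Or.inl (max_lt_iff.mp h1).1))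
      ((lexlt (p := b)).mpr (Or.inl (max_lt_iff.mp h1).2))
  · rw [pAdd_fst] at h1
    rcases lt_trichotomy a.1 b.1 with h3 | h3 | h3
    · -- a.1 < b.1 = d, pAdd a b = b
      have hb1 : b.1 = d := (max_eq_right h3.le).symm.trans h1
      rw [pAdd_eq_right h3] at h2
      exact key 0 m zero_le le_rfl (by simp)
        ((lexlt (p := a)).mpr (Or.inl (h3.trans_eq hb1)))
        ((lexlt (p := b)).mpr (Or.inr ⟨hb1, h2⟩))
    · -- a.1 = b.1 = d, pAdd a b = (a.1, a.2 + b.2)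
      have ha1 : a.1 = d := (max_eq_left h3.ge).symm.trans h1
      rw [pAdd_eq_add h3] at h2
      -- h2 : a.2 + b.2 < m
      have hstep : b.2 < m - a.2 := lt_tsub_iff_left.mpr h2
      obtain ⟨q, hq1, hq2⟩ := exists_between hstep
      have hqm : q ≤ m := hq2.le.trans tsub_le_self
      have ha2p : a.2 < m - q := lt_tsub_iff_right.mpr (lt_tsub_iff_left.mp hq2)
      exact key (m - q) q tsub_le_self hqm (tsub_add_cancel_of_le hqm).le
        ((lexlt (p := a)).mpr (Or.inr ⟨ha1, ha2p⟩))
        ((lexlt (p := b)).mpr (Or.inr ⟨h3.symm.trans ha1, hq1⟩))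
    · -- b.1 < a.1 = d, pAdd a b = a
      have ha1 : a.1 = d := (max_eq_left h3.le).symm.trans h1
      rw [pAdd_eq_left h3] at h2
      exact key m 0 le_rfl zero_le (by simp)
        ((lexlt (p := a)).mpr (Or.inr ⟨ha1, h2⟩))
        ((lexlt (p := b)).mpr (Or.inl (h3.trans_eq ha1)))

lemma continuous_pAdd :
    Continuous (fun p : LL × LL => toLex (pAdd (ofLex p.1) (ofLex p.2))) := by
  refine continuous_generateFrom_iff.mpr ?_
  rintro s ⟨c, rfl | rfl⟩
  · exact aux_gt (ofLex c).1 (ofLex c).2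
  · exact aux_lt (ofLex c).1 (ofLex c).2


lemma pAdd_zero' (a : UnitInterval' × ℝ≥0∞) : pAdd a pZero = a := by
  rcases lt_or_eq_of_le (show pZero.1 ≤ a.1 from a.1.2.1) with h | h
  · exact pAdd_eq_left h
  · rw [pAdd_eq_add h.symm]
    show (a.1, a.2 + 0) = a
    rw [add_zero]

theorem pAdd_topological_commutative_monoid :
    (∀ a b : UnitInterval' × ℝ≥0∞, pAdd a b = pAdd b a) ∧
    (∀ a b c : UnitInterval' × ℝ≥0∞, pAdd (pAdd a b) c = pAdd a (pAdd b c)) ∧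
    (∀ a : UnitInterval' × ℝ≥0∞, pAdd a pZero = a ∧ pAdd pZero a = a) ∧
    Continuous (fun p : Lex (UnitInterval' × ℝ≥0∞) × Lex (UnitInterval' × ℝ≥0∞) =>
      toLex (pAdd (ofLex p.1) (ofLex p.2))) := by
  refine ⟨pAdd_comm', pAdd_assoc',
    fun a => ⟨pAdd_zero' a, by rw [pAdd_comm']; exact pAdd_zero' a⟩, continuous_pAdd⟩
end

section
/- Let K ⊆ ℝ be Borel, f : K → ℝ Borel measurable, and let A, B ⊆ K be Borel with A ∩ B = ∅. If the Hausdorff integrals of f over A, over B, and over A ∪ B all exist, then (H)∫_{A∪B} f = (H)∫_A f + (H)∫_B f, where + is the pair addition. -/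
open MeasureTheory Filter Topology
open scoped ENNReal

/-- D_f^L = {x ∈ L : f(x) ≠ 0}. -/
def HD (L : Set ℝ) (f : ℝ → ℝ) : Set ℝ := {x ∈ L | f x ≠ 0}

/-- The Hausdorff dimension of D_f^L. -/
noncomputable def Hdim (L : Set ℝ) (f : ℝ → ℝ) : ℝ≥0∞ := dimH (HD L f)

/-- ∫_{D_f^L} f⁺ dμ^d, where d = dim_H D_f^L. -/
noncomputable def HIntPos (L : Set ℝ) (f : ℝ → ℝ) : ℝ≥0∞ :=
  ∫⁻ x in HD L f, ENNReal.ofReal (f x) ∂(μH[(Hdim L f).toReal])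

/-- ∫_{D_f^L} f⁻ dμ^d, where d = dim_H D_f^L. -/
noncomputable def HIntNeg (L : Set ℝ) (f : ℝ → ℝ) : ℝ≥0∞ :=
  ∫⁻ x in HD L f, ENNReal.ofReal (-f x) ∂(μH[(Hdim L f).toReal])

/-- The extended-real integral ∫_{D_f^L} f dμ^d exists (is not ∞ − ∞). -/
def HIntExists (L : Set ℝ) (f : ℝ → ℝ) : Prop := HIntPos L f ≠ ⊤ ∨ HIntNeg L f ≠ ⊤

/-- f is Hausdorff-integrable on L: the integral exists and is finite. -/
def HIntegrable (L : Set ℝ) (f : ℝ → ℝ) : Prop := HIntPos L f ≠ ⊤ ∧ HIntNeg L f ≠ ⊤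

/-- The value ∫_{D_f^L} f dμ^d ∈ [-∞,+∞]. -/
noncomputable def HIntVal (L : Set ℝ) (f : ℝ → ℝ) : EReal :=
  (HIntPos L f : EReal) - (HIntNeg L f : EReal)

/-- The Hausdorff integral (H)∫_L f = (dim_H D_f^L, ∫_{D_f^L} f dμ^{dim_H D_f^L}). -/
noncomputable def HInt (L : Set ℝ) (f : ℝ → ℝ) : ℝ≥0∞ × EReal := (Hdim L f, HIntVal L f)

/- STATEMENT 7: If K is Borel, f Borel measurable, A, B ⊆ K Borel with A ∩ B = ∅,
and the Hausdorff integrals over A, B and A ∪ B exist, then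
(H)∫_{A∪B} f = (H)∫_A f + (H)∫_B f under the pair addition. -/

lemma ecoe_eq {x : ℝ≥0∞} (hx : x ≠ ⊤) : (x : EReal) = ((x.toReal : ℝ) : EReal) := by
  rw [← EReal.toReal_coe_ennreal,
    EReal.coe_toReal (by simpa [EReal.coe_ennreal_eq_top_iff]) (EReal.coe_ennreal_ne_bot _)]

lemma etop_sub {y : ℝ≥0∞} (hy : y ≠ ⊤) : (⊤ : EReal) - y = ⊤ := by
  rw [ecoe_eq hy]; exact EReal.top_sub_coe _

lemma esub_ne_bot {x y : ℝ≥0∞} (hy : y ≠ ⊤) : (x : EReal) - y ≠ ⊥ := by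
  rcases eq_or_ne x ⊤ with hx | hx
  · rw [hx, EReal.coe_ennreal_top, etop_sub hy]; simp
  · rw [ecoe_eq hx, ecoe_eq hy, ← EReal.coe_sub]; exact EReal.coe_ne_bot _

lemma ereal_sub_add (a b c d : ℝ≥0∞) (h1 : a ≠ ⊤ ∨ c ≠ ⊤) (h2 : b ≠ ⊤ ∨ d ≠ ⊤)
    (h3 : a + b ≠ ⊤ ∨ c + d ≠ ⊤) :
    ((a + b : ℝ≥0∞) : EReal) - ((c + d : ℝ≥0∞) : EReal)
      = ((a : EReal) - c) + ((b : EReal) - d) := by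
  rcases eq_or_ne a ⊤ with ha | ha
  · have hc : c ≠ ⊤ := h1.resolve_left (by simp [ha])
    have hcd : c + d ≠ ⊤ := h3.resolve_left (by simp [ha])
    have hd : d ≠ ⊤ := fun h => hcd (by simp [h])
    rw [ha, top_add, EReal.coe_ennreal_top, etop_sub hcd,
      etop_sub hc, EReal.top_add_of_ne_bot (esub_ne_bot hd)]
  rcases eq_or_ne b ⊤ with hb | hb
  · have hd : d ≠ ⊤ := h2.resolve_left (by simp [hb])
    have hcd : c + d ≠ ⊤ := h3.resolve_left (by simp [hb])
    have hc : c ≠ ⊤ := fun h => hcd (by simp [h])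
    rw [hb, add_top, EReal.coe_ennreal_top, etop_sub hcd,
      etop_sub hd, EReal.add_top_of_ne_bot (esub_ne_bot hc)]
  rcases eq_or_ne c ⊤ with hc | hc
  · rw [hc, top_add, EReal.coe_ennreal_top, EReal.sub_top, EReal.sub_top, EReal.bot_add]
  rcases eq_or_ne d ⊤ with hd | hd
  · rw [hd, add_top, EReal.coe_ennreal_top, EReal.sub_top, EReal.sub_top, EReal.add_bot]
  have hab : a + b ≠ ⊤ := by simp [ENNReal.add_ne_top, ha, hb]
  have hcd : c + d ≠ ⊤ := by simp [ENNReal.add_ne_top, hc, hd]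
  rw [ecoe_eq hab, ecoe_eq hcd, ecoe_eq ha, ecoe_eq hb, ecoe_eq hc, ecoe_eq hd,
    ← EReal.coe_sub, ← EReal.coe_sub, ← EReal.coe_sub, ← EReal.coe_add, EReal.coe_eq_coe_iff,
    ENNReal.toReal_add ha hb, ENNReal.toReal_add hc hd]
  ring


open scoped NNReal

lemma hHD_union (A B : Set ℝ) (f : ℝ → ℝ) : HD (A ∪ B) f = HD A f ∪ HD B f := by
  ext x; simp [HD, Set.mem_union, or_and_right]

lemma hHD_meas {A : Set ℝ} (hA : MeasurableSet A) {f : ℝ → ℝ} (hf : Measurable f) :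
    MeasurableSet (HD A f) := by
  have h : HD A f = A ∩ f ⁻¹' ({0}ᶜ) := by ext x; simp [HD]
  rw [h]
  exact hA.inter (hf (measurableSet_singleton 0).compl)

lemma hHD_disj {A B : Set ℝ} (h : A ∩ B = ∅) {f : ℝ → ℝ} :
    Disjoint (HD A f) (HD B f) := by
  rw [Set.disjoint_iff_inter_eq_empty, ← Set.subset_empty_iff]
  intro x hx
  rw [← h]
  exact ⟨hx.1.1, hx.2.1⟩

lemma hdim_ne_top (L : Set ℝ) (f : ℝ → ℝ) : Hdim L f ≠ ⊤ := by
  have h := dimH_mono (Set.subset_univ (HD L f))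
  rw [Real.dimH_univ] at h
  exact (h.trans_lt ENNReal.one_lt_top).ne

lemma hmeasure_zero {s : Set ℝ} {d : ℝ≥0∞} (hd : d ≠ ⊤) (h : dimH s < d) :
    μH[d.toReal] s = 0 := by
  have h2 : dimH s < (d.toNNReal : ℝ≥0∞) := by rwa [ENNReal.coe_toNNReal hd]
  exact hausdorffMeasure_of_dimH_lt h2

/-- When `Hdim A f < Hdim B f`, the part over `A` is invisible. -/
lemma hInt_union_lt {A B : Set ℝ} {f : ℝ → ℝ} (hf : Measurable f)
    (hA : MeasurableSet A) (hB : MeasurableSet B) (hdisj : A ∩ B = ∅)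
    (hlt : Hdim A f < Hdim B f) : HInt (A ∪ B) f = HInt B f := by
  have hdim : Hdim (A ∪ B) f = Hdim B f := by
    rw [Hdim, hHD_union, dimH_union]; exact max_eq_right hlt.le
  have hzero : μH[(Hdim B f).toReal] (HD A f) = 0 :=
    hmeasure_zero (hdim_ne_top B f) hlt
  have key : ∀ g : ℝ → ℝ,
      (∫⁻ x in HD (A ∪ B) f, ENNReal.ofReal (g x) ∂(μH[(Hdim (A ∪ B) f).toReal]))
        = ∫⁻ x in HD B f, ENNReal.ofReal (g x) ∂(μH[(Hdim B f).toReal]) := by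
    intro g
    rw [hdim, hHD_union, lintegral_union (hHD_meas hB hf) (hHD_disj hdisj),
      setLIntegral_measure_zero _ _ hzero, zero_add]
  rw [HInt, HInt, hdim, HIntVal, HIntVal, HIntPos, HIntPos, HIntNeg, HIntNeg,
    key f, key (fun x => -f x)]



theorem hInt_union (K A B : Set ℝ) (f : ℝ → ℝ)
    (hK : MeasurableSet K) (hf : Measurable f)
    (hA : MeasurableSet A) (hB : MeasurableSet B)
    (hAK : A ⊆ K) (hBK : B ⊆ K) (hdisj : A ∩ B = ∅)
    (heA : HIntExists A f) (heB : HIntExists B f) (heAB : HIntExists (A ∪ B) f) :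
    HInt (A ∪ B) f = pAdd (HInt A f) (HInt B f) := by
  rcases lt_trichotomy (Hdim A f) (Hdim B f) with hlt | heq | hgt
  · rw [hInt_union_lt hf hA hB hdisj hlt]; simp [pAdd, HInt, hlt]
  · -- equal dimensions
    have hdim : Hdim (A ∪ B) f = Hdim A f := by
      rw [Hdim, hHD_union, dimH_union, ← Hdim, ← Hdim, ← heq, max_self]
    have keyP : HIntPos (A ∪ B) f = HIntPos A f + HIntPos B f := by
      rw [HIntPos, HIntPos, HIntPos, hdim, hHD_union,
        lintegral_union (hHD_meas hB hf) (hHD_disj hdisj), ← heq]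
    have keyN : HIntNeg (A ∪ B) f = HIntNeg A f + HIntNeg B f := by
      rw [HIntNeg, HIntNeg, HIntNeg, hdim, hHD_union,
        lintegral_union (hHD_meas hB hf) (hHD_disj hdisj), ← heq]
    have hval : HIntVal (A ∪ B) f = HIntVal A f + HIntVal B f := by
      rw [HIntVal, HIntVal, HIntVal, keyP, keyN]
      exact ereal_sub_add _ _ _ _ heA heB (by rwa [HIntExists, keyP, keyN] at heAB)
    rw [HInt, hdim, hval]
    simp [pAdd, HInt, heq]
  · rw [Set.union_comm, hInt_union_lt hf hB hA (by rwa [Set.inter_comm]) hgt]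
    simp [pAdd, HInt, hgt, hgt.not_gt]
end

section
/- Let K ⊆ ℝ be Borel. If f, g : K → ℝ are Hausdorff-integrable and 0 ≤ f, 0 ≤ g, then f + g is Hausdorff-integrable and (H)∫_K (f+g) = (H)∫_K f + (H)∫_K g, where the sum on the right is the pair addition. -/
open MeasureTheory Filter Topology
open scoped ENNReal

/-- HD is a measurable set. -/
lemma HD_measurable {K : Set ℝ} {f : ℝ → ℝ} (hK : MeasurableSet K) (hf : Measurable f) :
    MeasurableSet (HD K f) := by
  have : HD K f = K ∩ f ⁻¹' {0}ᶜ := by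
    ext x; simp [HD]
  rw [this]
  exact hK.inter (hf (measurableSet_singleton 0).compl)

/-- The negative part vanishes for nonnegative functions. -/
lemma HIntNeg_eq_zero {K : Set ℝ} {f : ℝ → ℝ} (hK : MeasurableSet K) (hf : Measurable f)
    (hf0 : ∀ x ∈ K, 0 ≤ f x) : HIntNeg K f = 0 := by
  have h := setLIntegral_congr_fun (μ := μH[(Hdim K f).toReal])
    (f := fun x => ENNReal.ofReal (-f x)) (g := fun _ => 0) (HD_measurable hK hf)
    (fun x hx => by
      simp only [ENNReal.ofReal_eq_zero]
      linarith [hf0 x hx.1])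
  simpa [HIntNeg] using h

/-- If the dimension of HD K f is less than d, the positive-part integral w.r.t. μH[d] is 0. -/
lemma lint_zero_of_dim_lt {K : Set ℝ} {f : ℝ → ℝ} {d : ℝ≥0∞} (hd : Hdim K f < d) (hdt : d ≠ ⊤)
    (F : ℝ → ℝ≥0∞) : ∫⁻ x in HD K f, F x ∂(μH[d.toReal]) = 0 := by
  apply setLIntegral_measure_zero
  have : dimH (HD K f) < (d.toNNReal : ℝ≥0∞) := by
    rwa [ENNReal.coe_toNNReal hdt]
  have h0 := hausdorffMeasure_of_dimH_lt this
  rwa [ENNReal.toReal]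

lemma Hdim_le_one (K : Set ℝ) (f : ℝ → ℝ) : Hdim K f ≤ 1 := by
  have := dimH_mono (Set.subset_univ (HD K f))
  rwa [Real.dimH_univ] at this

theorem hInt_add_of_nonneg (K : Set ℝ) (f g : ℝ → ℝ)
    (hK : MeasurableSet K) (hf : Measurable f) (hg : Measurable g)
    (hf0 : ∀ x ∈ K, 0 ≤ f x) (hg0 : ∀ x ∈ K, 0 ≤ g x)
    (hfi : HIntegrable K f) (hgi : HIntegrable K g) :
    HIntegrable K (fun x => f x + g x) ∧
    HInt K (fun x => f x + g x) = pAdd (HInt K f) (HInt K g) := by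
  set h : ℝ → ℝ := fun x => f x + g x with hh
  have hh0 : ∀ x ∈ K, 0 ≤ h x := fun x hx => by
    have := hf0 x hx; have := hg0 x hx; simp only [hh]; linarith
  have hhm : Measurable h := hf.add hg
  -- the union decomposition
  have hHD : HD K h = HD K f ∪ HD K g := by
    ext x
    constructor
    · rintro ⟨hxK, hne⟩
      rcases eq_or_ne (f x) 0 with h1 | h1
      · exact Or.inr ⟨hxK, fun h2 => hne (by simp [hh, h1, h2])⟩
      · exact Or.inl ⟨hxK, h1⟩
    · rintro (⟨hxK, hne⟩ | ⟨hxK, hne⟩) <;>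
      · refine ⟨hxK, fun hc => hne ?_⟩
        have := hf0 x hxK; have := hg0 x hxK
        have hc' : f x + g x = 0 := hc
        linarith
  have hdim : Hdim K h = max (Hdim K f) (Hdim K g) := by
    rw [Hdim, hHD, dimH_union]; rfl
  -- splitting of the positive integral
  have hsplit : ∀ d : ℝ,
      (∫⁻ x in HD K h, ENNReal.ofReal (h x) ∂(μH[d])) =
        (∫⁻ x in HD K f, ENNReal.ofReal (f x) ∂(μH[d])) +
        (∫⁻ x in HD K g, ENNReal.ofReal (g x) ∂(μH[d])) := by
    intro d
    have hmf := HD_measurable hK hf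
    have hmg := HD_measurable hK hg
    have hmh : MeasurableSet (HD K h) := hHD ▸ hmf.union hmg
    -- pointwise split of ofReal
    have e1 : (∫⁻ x in HD K h, ENNReal.ofReal (h x) ∂(μH[d])) =
        ∫⁻ x in HD K h, (ENNReal.ofReal (f x) + ENNReal.ofReal (g x)) ∂(μH[d]) := by
      apply setLIntegral_congr_fun hmh
      intro x hx
      have hxK : x ∈ K := hx.1
      exact ENNReal.ofReal_add (hf0 x hxK) (hg0 x hxK)
    rw [e1, lintegral_add_left (hf.ennreal_ofReal)]
    congr 1
    · -- ∫ over union of ofReal f = ∫ over HD K f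
      have hd' : HD K h = HD K f ∪ (HD K g \ HD K f) := by
        rw [hHD, Set.union_diff_self]
      rw [hd', lintegral_union (hmg.diff hmf) disjoint_sdiff_self_right]
      have : (∫⁻ x in HD K g \ HD K f, ENNReal.ofReal (f x) ∂(μH[d])) = 0 := by
        have := setLIntegral_congr_fun (μ := μH[d]) (f := fun x => ENNReal.ofReal (f x))
          (g := fun _ => 0) (hmg.diff hmf)
          (fun x hx => by
            have hxK : x ∈ K := hx.1.1
            have : f x = 0 := by
              by_contra h'
              exact hx.2 ⟨hxK, h'⟩
            simp [this])
        simpa using this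
      rw [this, add_zero]
    · -- ∫ over union of ofReal g = ∫ over HD K g
      have hd' : HD K h = HD K g ∪ (HD K f \ HD K g) := by
        rw [hHD, Set.union_comm, Set.union_diff_self, Set.union_comm]
      rw [hd', lintegral_union (hmf.diff hmg) disjoint_sdiff_self_right]
      have : (∫⁻ x in HD K f \ HD K g, ENNReal.ofReal (g x) ∂(μH[d])) = 0 := by
        have := setLIntegral_congr_fun (μ := μH[d]) (f := fun x => ENNReal.ofReal (g x))
          (g := fun _ => 0) (hmf.diff hmg)
          (fun x hx => by
            have hxK : x ∈ K := hx.1.1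
            have : g x = 0 := by
              by_contra h'
              exact hx.2 ⟨hxK, h'⟩
            simp [this])
        simpa using this
      rw [this, add_zero]
  -- negative parts vanish
  have hnf := HIntNeg_eq_zero hK hf hf0
  have hng := HIntNeg_eq_zero hK hg hg0
  have hnh := HIntNeg_eq_zero hK hhm hh0
  have hvf : HIntVal K f = (HIntPos K f : EReal) := by
    rw [HIntVal, hnf]; simp
  have hvg : HIntVal K g = (HIntPos K g : EReal) := by
    rw [HIntVal, hng]; simp
  have hvh : HIntVal K h = (HIntPos K h : EReal) := by
    rw [HIntVal, hnh]; simp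
  have hftop : Hdim K f ≠ ⊤ := (lt_of_le_of_lt (Hdim_le_one K f) (by norm_num)).ne
  have hgtop : Hdim K g ≠ ⊤ := (lt_of_le_of_lt (Hdim_le_one K g) (by norm_num)).ne
  rcases lt_trichotomy (Hdim K f) (Hdim K g) with hlt | heq | hgt
  · -- dim f < dim g : result is (dim g, val g)
    have hdm : Hdim K h = Hdim K g := by rw [hdim, max_eq_right hlt.le]
    have hzero : (∫⁻ x in HD K f, ENNReal.ofReal (f x) ∂(μH[(Hdim K g).toReal])) = 0 :=
      lint_zero_of_dim_lt hlt hgtop _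
    have hP : HIntPos K h = HIntPos K g := by
      rw [HIntPos, hdm, hsplit, hzero, zero_add]; rfl
    constructor
    · exact ⟨by rw [hP]; exact hgi.1, by rw [hnh]; exact ENNReal.zero_ne_top⟩
    · rw [pAdd, if_pos (show (HInt K f).1 < (HInt K g).1 from hlt)]
      rw [HInt, HInt, hdm, hvh, hP, ← hvg]
  · -- equal dimensions
    have hdm : Hdim K h = Hdim K f := by rw [hdim, heq, max_self]
    have hP : HIntPos K h = HIntPos K f + HIntPos K g := by
      rw [HIntPos, hdm, hsplit]
      rw [HIntPos, HIntPos, heq]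
    constructor
    · refine ⟨?_, by rw [hnh]; exact ENNReal.zero_ne_top⟩
      rw [hP]
      exact ENNReal.add_ne_top.mpr ⟨hfi.1, hgi.1⟩
    · rw [pAdd, if_neg (show ¬(HInt K f).1 < (HInt K g).1 from by simp [HInt, heq]),
        if_neg (show ¬(HInt K g).1 < (HInt K f).1 from by simp [HInt, heq])]
      show HInt K h = (Hdim K f, HIntVal K f + HIntVal K g)
      rw [HInt, hdm, hvh, hvf, hvg, hP, EReal.coe_ennreal_add]
  · -- dim g < dim f
    have hdm : Hdim K h = Hdim K f := by rw [hdim, max_eq_left hgt.le]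
    have hzero : (∫⁻ x in HD K g, ENNReal.ofReal (g x) ∂(μH[(Hdim K f).toReal])) = 0 :=
      lint_zero_of_dim_lt hgt hftop _
    have hP : HIntPos K h = HIntPos K f := by
      rw [HIntPos, hdm, hsplit, hzero, add_zero]; rfl
    constructor
    · exact ⟨by rw [hP]; exact hfi.1, by rw [hnh]; exact ENNReal.zero_ne_top⟩
    · rw [pAdd, if_neg (show ¬(HInt K f).1 < (HInt K g).1 from not_lt_of_gt hgt),
        if_pos (show (HInt K g).1 < (HInt K f).1 from hgt)]
      rw [HInt, HInt, hdm, hvh, hP, ← hvf]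
end

section
/- Let K ⊆ ℝ be Borel. If f, g : K → ℝ are Hausdorff-integrable and 0 ≤ f ≤ g, then (H)∫_K f ≤ (H)∫_K g in the lexicographic order. -/
open MeasureTheory Filter Topology
open scoped ENNReal

/- STATEMENT 11: If K is Borel and f, g : K → ℝ are Hausdorff-integrable with
0 ≤ f ≤ g, then (H)∫_K f ≤ (H)∫_K g in the lexicographic order. -/

theorem hInt_mono_of_nonneg (K : Set ℝ) (f g : ℝ → ℝ)
    (hK : MeasurableSet K) (hf : Measurable f) (hg : Measurable g)
    (hf0 : ∀ x ∈ K, 0 ≤ f x) (hfg : ∀ x ∈ K, f x ≤ g x)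
    (hfi : HIntegrable K f) (hgi : HIntegrable K g) :
    toLex (HInt K f) ≤ toLex (HInt K g) := by
  have hsub : HD K f ⊆ HD K g := by
    intro x hx
    refine ⟨hx.1, fun h => hx.2 ?_⟩
    have h1 := hf0 x hx.1
    have h2 := hfg x hx.1
    linarith
  have hdim : Hdim K f ≤ Hdim K g := dimH_mono hsub
  rcases lt_or_eq_of_le hdim with h | h
  · exact Prod.Lex.le_iff.2 (Or.inl h)
  · refine Prod.Lex.le_iff.2 (Or.inr ⟨h, ?_⟩)
    have hmf : MeasurableSet (HD K f) := by
      have : HD K f = K ∩ {x | f x ≠ 0} := rfl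
      rw [this]
      exact hK.inter ((measurableSet_singleton (0:ℝ)).preimage hf).compl
    have hmg : MeasurableSet (HD K g) := by
      have : HD K g = K ∩ {x | g x ≠ 0} := rfl
      rw [this]
      exact hK.inter ((measurableSet_singleton (0:ℝ)).preimage hg).compl
    have hnegf : HIntNeg K f = 0 := by
      unfold HIntNeg
      rw [MeasureTheory.setLIntegral_congr_fun hmf
        (fun x hx => ?_), lintegral_zero]
      show ENNReal.ofReal (-f x) = (0 : ℝ → ℝ≥0∞) x
      simp only [Pi.zero_apply, ENNReal.ofReal_eq_zero]
      linarith [hf0 x hx.1]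
    have hnegg : HIntNeg K g = 0 := by
      unfold HIntNeg
      rw [MeasureTheory.setLIntegral_congr_fun hmg
        (fun x hx => ?_), lintegral_zero]
      show ENNReal.ofReal (-g x) = (0 : ℝ → ℝ≥0∞) x
      simp only [Pi.zero_apply, ENNReal.ofReal_eq_zero]
      linarith [hf0 x hx.1, hfg x hx.1]
    have hpos : HIntPos K f ≤ HIntPos K g := by
      unfold HIntPos
      rw [show (Hdim K f).toReal = (Hdim K g).toReal from by rw [h]]
      calc ∫⁻ x in HD K f, ENNReal.ofReal (f x) ∂(μH[(Hdim K g).toReal])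
          ≤ ∫⁻ x in HD K f, ENNReal.ofReal (g x) ∂(μH[(Hdim K g).toReal]) := by
            refine MeasureTheory.setLIntegral_mono hg.ennreal_ofReal (fun x hx => ?_)
            exact ENNReal.ofReal_le_ofReal (hfg x hx.1)
        _ ≤ ∫⁻ x in HD K g, ENNReal.ofReal (g x) ∂(μH[(Hdim K g).toReal]) :=
            MeasureTheory.lintegral_mono_set hsub
    show HIntVal K f ≤ HIntVal K g
    unfold HIntVal
    rw [hnegf, hnegg]
    simp only [EReal.coe_ennreal_zero, sub_zero]
    exact EReal.coe_ennreal_le_coe_ennreal_iff.2 hpos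
end

section
/- Define d_s(A,B) = μ^H(A △ B) for A, B ⊆ ℝ, where A △ B is the symmetric difference. Then d_s is an h-metric on the power set of ℝ: d_s(A,B) = (0,0) iff A = B; d_s(A,B) = d_s(B,A); and d_s(A,C) ≤ d_s(A,B) + d_s(B,C) for all A, B, C ⊆ ℝ, where ≤ is the lexicographic order and + is the pair addition. -/
/- STATEMENT 15: d_s(A,B) = μ^H(A △ B) is an h-metric on the power set of ℝ:
d_s(A,B) = (0,0) iff A = B; d_s is symmetric; and d_s(A,C) ≤ d_s(A,B) + d_s(B,C),
where ≤ is the lexicographic order and + the pair addition. -/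

open MeasureTheory
open scoped ENNReal symmDiff

/-- μ^H(K) = (dim_H K, μ^{dim_H K}(K)). -/
noncomputable def muH (A : Set ℝ) : ℝ≥0∞ × ℝ≥0∞ :=
  (dimH A, μH[(dimH A).toReal] A)

/-- d_s(A,B) = μ^H(A △ B). -/
noncomputable def dS (A B : Set ℝ) : ℝ≥0∞ × ℝ≥0∞ := muH (A ∆ B)

lemma dimH_real_ne_top (s : Set ℝ) : dimH s ≠ ∞ :=
  ne_top_of_le_ne_top (by simp [Real.dimH_univ]) (dimH_mono (Set.subset_univ s))

lemma haus_zero_of_lt {s : Set ℝ} {d : ℝ≥0∞} (h : dimH s < d) (hd : d ≠ ∞) :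
    μH[d.toReal] s = 0 := by
  have h' : dimH s < (d.toNNReal : ℝ≥0∞) := by rwa [ENNReal.coe_toNNReal hd]
  exact hausdorffMeasure_of_dimH_lt h'

theorem dS_is_h_metric :
    (∀ A B : Set ℝ, dS A B = (0, 0) ↔ A = B) ∧
    (∀ A B : Set ℝ, dS A B = dS B A) ∧
    (∀ A B C : Set ℝ, toLex (dS A C) ≤ toLex (pAdd (dS A B) (dS B C))) := by
  refine ⟨fun A B => ?_, fun A B => ?_, fun A B C => ?_⟩
  · constructor
    · intro h
      have h2 : μH[(dimH (A ∆ B)).toReal] (A ∆ B) = 0 := congrArg Prod.snd h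
      have h1 : dimH (A ∆ B) = 0 := congrArg Prod.fst h
      rw [h1] at h2
      simp only [ENNReal.toReal_zero] at h2
      by_contra hne
      have hnonempty : (A ∆ B).Nonempty := by
        rw [Set.nonempty_iff_ne_empty]
        intro he
        exact hne (symmDiff_eq_bot.mp he)
      have := Measure.one_le_hausdorffMeasure_zero_of_nonempty hnonempty
      simp [h2] at this
    · rintro rfl
      simp [dS, muH, symmDiff_self]
  · simp [dS, muH, symmDiff_comm]
  · have hsub : A ∆ C ⊆ (A ∆ B) ∪ (B ∆ C) := symmDiff_triangle A B C
    set d1 := dimH (A ∆ B) with hd1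
    set d2 := dimH (B ∆ C) with hd2
    set d := dimH (A ∆ C) with hd
    have hdle : d ≤ max d1 d2 := by
      rw [hd, hd1, hd2, ← dimH_union]
      exact dimH_mono hsub
    have hmeas : ∀ e : ℝ, μH[e] (A ∆ C) ≤ μH[e] (A ∆ B) + μH[e] (B ∆ C) :=
      fun e => (measure_mono hsub).trans (measure_union_le _ _)
    simp only [dS, muH, pAdd, ← hd1, ← hd2, ← hd]
    rcases lt_trichotomy d1 d2 with h12 | h12 | h12
    · rw [if_pos h12]
      rw [Prod.Lex.le_iff]
      have hdle2 : d ≤ d2 := hdle.trans (max_le (le_of_lt h12) le_rfl)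
      rcases lt_or_eq_of_le hdle2 with hlt | heq
      · exact Or.inl hlt
      · refine Or.inr ⟨heq, ?_⟩
        have hz : μH[d2.toReal] (A ∆ B) = 0 := by
          refine haus_zero_of_lt ?_ (dimH_real_ne_top _)
          rwa [← hd1]
        calc μH[d.toReal] (A ∆ C) ≤ μH[d2.toReal] (A ∆ B) + μH[d2.toReal] (B ∆ C) := by
              rw [heq]; exact hmeas _
          _ = μH[d2.toReal] (B ∆ C) := by rw [hz, zero_add]
    · rw [if_neg (by simp [h12]), if_neg (by simp [h12]), Prod.Lex.le_iff]
      have hdle1 : d ≤ d1 := by simpa [h12] using hdle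
      rcases lt_or_eq_of_le hdle1 with hlt | heq
      · exact Or.inl hlt
      · refine Or.inr ⟨heq, ?_⟩
        have := hmeas d.toReal
        rw [heq, ← h12] at *
        simpa [heq] using hmeas d1.toReal
    · rw [if_neg (not_lt.mpr h12.le), if_pos h12, Prod.Lex.le_iff]
      have hdle1 : d ≤ d1 := hdle.trans (max_le le_rfl h12.le)
      rcases lt_or_eq_of_le hdle1 with hlt | heq
      · exact Or.inl hlt
      · refine Or.inr ⟨heq, ?_⟩
        have hz : μH[d1.toReal] (B ∆ C) = 0 := by
          refine haus_zero_of_lt ?_ (dimH_real_ne_top _)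
          rwa [← hd2]
        calc μH[d.toReal] (A ∆ C) ≤ μH[d1.toReal] (A ∆ B) + μH[d1.toReal] (B ∆ C) := by
              rw [heq]; exact hmeas _
          _ = μH[d1.toReal] (A ∆ B) := by rw [hz, add_zero]
end

section
/- (Riesz-Fischer analog.) Let K ⊆ ℝ be Borel. The h-metric space ⟨L_H(K), d_H⟩ is complete: for every sequence (f_n) in L_H(K) that is Cauchy (for every ε > 0 there is N such that for all n, m > N, d_H(f_n,f_m) < (0,ε) in the lexicographic order, i.e. dim_H D_{|f_n−f_m|} = 0 and ∫ |f_n−f_m| dμ^0 < ε), there exists f ∈ L_H(K) with d_H(f_n, f) → (0,0), i.e. for every ε > 0 eventually d_H(f_n,f) < (0,ε). -/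
open MeasureTheory Filter Topology
open scoped ENNReal

/- STATEMENT 19 (Riesz-Fischer analog): ⟨L_H(K), d_H⟩ is complete: every Cauchy sequence
(for every ε > 0 eventually d_H(f_n,f_m) < (0,ε) in the lexicographic order) has a limit
f ∈ L_H(K), i.e. for every ε > 0 eventually d_H(f_n,f) < (0,ε). -/

/-- f ∈ L_H(K): f is Borel measurable and |f| is Hausdorff-integrable on K. -/
def MemLH (K : Set ℝ) (f : ℝ → ℝ) : Prop :=
  Measurable f ∧ HIntegrable K (fun x => |f x|)

/-- d_H(f,g) = (H)∫_K |f − g|. -/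
noncomputable def dLH (K : Set ℝ) (f g : ℝ → ℝ) : ℝ≥0∞ × EReal :=
  HInt K (fun x => |f x - g x|)

lemma mu0_pos_of_nonempty {s : Set ℝ} (hs : s.Nonempty) : 1 ≤ μH[(0:ℝ)] s := by
  obtain ⟨x, hx⟩ := hs
  calc (1:ℝ≥0∞) = μH[(0:ℝ)] {x} := (MeasureTheory.Measure.hausdorffMeasure_zero_singleton x).symm
    _ ≤ μH[(0:ℝ)] s := measure_mono (Set.singleton_subset_iff.2 hx)

lemma mu0_null_iff {s : Set ℝ} (h : μH[(0:ℝ)] s = 0) : s = ∅ := by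
  by_contra h'
  have h1 := mu0_pos_of_nonempty (Set.nonempty_iff_ne_empty.2 h')
  rw [h] at h1
  exact (by norm_num : ¬ (1:ℝ≥0∞) ≤ 0) h1

lemma HIntNeg_eq_zero_s19 (L : Set ℝ) (F : ℝ → ℝ) (hF : ∀ x, 0 ≤ F x) : HIntNeg L F = 0 := by
  have : ∀ x, ENNReal.ofReal (-F x) = 0 := fun x =>
    ENNReal.ofReal_of_nonpos (neg_nonpos.2 (hF x))
  simp only [HIntNeg, this, lintegral_const, zero_mul]

lemma HIntVal_eq (L : Set ℝ) (F : ℝ → ℝ) (hF : ∀ x, 0 ≤ F x) :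
    HIntVal L F = ((HIntPos L F : ℝ≥0∞) : EReal) := by
  rw [HIntVal, HIntNeg_eq_zero_s19 L F hF, EReal.coe_ennreal_zero, sub_zero]

lemma measurableSet_HD {K : Set ℝ} (hK : MeasurableSet K) {F : ℝ → ℝ} (hFm : Measurable F) :
    MeasurableSet (HD K F) := by
  have : HD K F = K ∩ F ⁻¹' {0}ᶜ := by ext x; simp [HD]
  rw [this]; exact hK.inter (hFm (measurableSet_singleton 0).compl)

lemma setLIntegral_HD (μ : Measure ℝ) {K : Set ℝ} (hK : MeasurableSet K) {F : ℝ → ℝ}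
    (hFm : Measurable F) :
    ∫⁻ x in HD K F, ENNReal.ofReal (F x) ∂μ = ∫⁻ x in K, ENNReal.ofReal (F x) ∂μ := by
  rw [← lintegral_indicator (measurableSet_HD hK hFm), ← lintegral_indicator hK]
  congr 1
  funext x
  by_cases hxK : x ∈ K
  · by_cases hx0 : F x = 0
    · simp [Set.indicator, HD, hxK, hx0]
    · simp [Set.indicator, HD, hxK, hx0]
  · simp [Set.indicator, HD, hxK]

lemma coe_lt_ofReal {a : ℝ≥0∞} {ε : ℝ} (hε : 0 ≤ ε) :
    (a : EReal) < (ε : EReal) ↔ a < ENNReal.ofReal ε := by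
  rw [← EReal.coe_ennreal_lt_coe_ennreal_iff, EReal.coe_ennreal_ofReal, max_eq_left hε]

lemma lex_lt_iff {ε : ℝ} (p : ℝ≥0∞ × EReal) :
    toLex p < toLex ((0:ℝ≥0∞), (ε : EReal)) ↔ p.1 = 0 ∧ p.2 < (ε : EReal) := by
  rw [Prod.Lex.lt_iff]
  simp

lemma HIntPos_dim0 {K : Set ℝ} (hK : MeasurableSet K) {F : ℝ → ℝ} (hFm : Measurable F)
    (h1 : dimH (HD K F) = 0) :
    HIntPos K F = ∫⁻ x in K, ENNReal.ofReal (F x) ∂(μH[(0:ℝ)]) := by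
  rw [HIntPos, Hdim, h1, ENNReal.toReal_zero]
  exact setLIntegral_HD _ hK hFm

lemma HInt_lt_iff {K : Set ℝ} (hK : MeasurableSet K) (F : ℝ → ℝ) (hFm : Measurable F)
    (hF0 : ∀ x, 0 ≤ F x) {ε : ℝ} (hε : 0 < ε) :
    toLex (HInt K F) < toLex ((0 : ℝ≥0∞), (ε : EReal)) ↔
      dimH (HD K F) = 0 ∧
        ∫⁻ x in K, ENNReal.ofReal (F x) ∂(μH[(0 : ℝ)]) < ENNReal.ofReal ε := by
  rw [HInt, lex_lt_iff]
  constructor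
  · rintro ⟨h1, h2⟩
    rw [Hdim] at h1
    refine ⟨h1, ?_⟩
    rw [HIntVal_eq K F hF0, coe_lt_ofReal hε.le, HIntPos_dim0 hK hFm h1] at h2
    exact h2
  · rintro ⟨h1, h2⟩
    refine ⟨by rw [Hdim]; exact h1, ?_⟩
    rw [HIntVal_eq K F hF0, coe_lt_ofReal hε.le, HIntPos_dim0 hK hFm h1]
    exact h2

theorem LH_complete (K : Set ℝ) (hK : MeasurableSet K) (f : ℕ → ℝ → ℝ)
    (hf : ∀ n, MemLH K (f n))
    (hcauchy : ∀ ε : ℝ, 0 < ε → ∃ N : ℕ, ∀ n m : ℕ, N < n → N < m →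
      toLex (dLH K (f n) (f m)) < toLex ((0 : ℝ≥0∞), (ε : EReal))) :
    ∃ g : ℝ → ℝ, MemLH K g ∧
      ∀ ε : ℝ, 0 < ε → ∃ N : ℕ, ∀ n : ℕ, N < n →
        toLex (dLH K (f n) g) < toLex ((0 : ℝ≥0∞), (ε : EReal)) := by
  classical
  have hm : ∀ n, Measurable (f n) := fun n => (hf n).1
  have hcau : ∀ ε : ℝ, 0 < ε → ∃ N : ℕ, ∀ n m : ℕ, N < n → N < m →
      dimH (HD K fun x => |f n x - f m x|) = 0 ∧
      ∫⁻ x in K, ENNReal.ofReal |f n x - f m x| ∂(μH[(0:ℝ)]) < ENNReal.ofReal ε := by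
    intro ε hε
    obtain ⟨N, hN⟩ := hcauchy ε hε
    exact ⟨N, fun n m hn hm' =>
      (HInt_lt_iff hK _ ((hm n).sub (hm m)).abs (fun x => abs_nonneg _) hε).1 (hN n m hn hm')⟩
  obtain ⟨N₁, hN₁⟩ := hcau 1 one_pos
  set s : ℕ → ℕ := fun k => N₁ + 1 + k with hs
  have hsgt : ∀ k, N₁ < s k := fun k => by simp only [hs]; omega
  set μ' : Measure ℝ := (μH[(0:ℝ)]).restrict K with hμ'
  have hmeash : ∀ k, Measurable fun x => f (s k) x - f (s 0) x := fun k => (hm _).sub (hm _)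
  have hint : ∀ k, ∫⁻ x, (‖f (s k) x - f (s 0) x‖₊ : ℝ≥0∞) ∂μ' < ⊤ := by
    intro k
    have h2 := (hN₁ (s k) (s 0) (hsgt k) (hsgt 0)).2
    calc ∫⁻ x, (‖f (s k) x - f (s 0) x‖₊ : ℝ≥0∞) ∂μ'
        = ∫⁻ x in K, ENNReal.ofReal |f (s k) x - f (s 0) x| ∂(μH[(0:ℝ)]) := by
          rw [hμ']; exact lintegral_congr fun x => Real.enorm_eq_ofReal_abs _
      _ < ENNReal.ofReal 1 := h2
      _ < ⊤ := ENNReal.ofReal_lt_top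
  have hmemh : ∀ k, MemLp (fun x => f (s k) x - f (s 0) x) 1 μ' := by
    intro k
    refine ⟨(hmeash k).aestronglyMeasurable, ?_⟩
    rw [eLpNorm_one_eq_lintegral_enorm]
    exact hint k
  set φ : ℕ → Lp ℝ 1 μ' := fun k => (hmemh k).toLp _ with hφ
  have hdiff : ∀ a b : ℕ, eLpNorm (⇑(φ a) - ⇑(φ b)) 1 μ' =
      ∫⁻ x in K, ENNReal.ofReal |f (s a) x - f (s b) x| ∂(μH[(0:ℝ)]) := by
    intro a b
    have h1 : ⇑(φ a) - ⇑(φ b) =ᵐ[μ'] fun x => f (s a) x - f (s b) x := by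
      filter_upwards [MemLp.coeFn_toLp (hmemh a), MemLp.coeFn_toLp (hmemh b)] with x ha hb
      simp only [Pi.sub_apply, hφ] at *
      rw [ha, hb]; ring
    rw [eLpNorm_congr_ae h1, eLpNorm_one_eq_lintegral_enorm, hμ']
    exact lintegral_congr fun x => Real.enorm_eq_ofReal_abs _
  have hcauφ : CauchySeq φ := by
    rw [Metric.cauchySeq_iff]
    intro ε hε
    obtain ⟨N, hN⟩ := hcau ε hε
    refine ⟨N + 1, fun a ha b hb => ?_⟩
    have hsa : N < s a := lt_of_lt_of_le ha (Nat.le_add_left a (N₁ + 1))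
    have hsb : N < s b := lt_of_lt_of_le hb (Nat.le_add_left b (N₁ + 1))
    have h2 := (hN (s a) (s b) hsa hsb).2
    rw [Lp.dist_def, hdiff a b]
    have hne : (∫⁻ x in K, ENNReal.ofReal |f (s a) x - f (s b) x| ∂(μH[(0:ℝ)])) ≠ ⊤ :=
      (lt_trans h2 ENNReal.ofReal_lt_top).ne
    have h3 := (ENNReal.toReal_lt_toReal hne ENNReal.ofReal_ne_top).2 h2
    rwa [ENNReal.toReal_ofReal hε.le] at h3
  obtain ⟨H, hH⟩ := cauchySeq_tendsto_of_complete hcauφ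
  set hmk : ℝ → ℝ := (Lp.aestronglyMeasurable H).mk H with hhmk
  have hmkmeas : Measurable hmk := (Lp.aestronglyMeasurable H).stronglyMeasurable_mk.measurable
  have hmk_ae : ⇑H =ᵐ[μ'] hmk := (Lp.aestronglyMeasurable H).ae_eq_mk
  have hIeq : ∀ k, ∫⁻ x in K, ENNReal.ofReal |f (s k) x - f (s 0) x - hmk x| ∂(μH[(0:ℝ)]) =
      eLpNorm (⇑(φ k - H)) 1 μ' := by
    intro k
    have h1 : ⇑(φ k - H) =ᵐ[μ'] fun x => f (s k) x - f (s 0) x - hmk x := by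
      filter_upwards [Lp.coeFn_sub (φ k) H, MemLp.coeFn_toLp (hmemh k), hmk_ae] with x h1 h2 h3
      rw [h1]
      simp only [Pi.sub_apply, hφ] at *
      rw [h2, h3]
    rw [eLpNorm_congr_ae h1, eLpNorm_one_eq_lintegral_enorm, hμ']
    exact (lintegral_congr fun x => Real.enorm_eq_ofReal_abs _).symm
  have hconv : ∀ ε : ℝ, 0 < ε → ∃ N : ℕ, ∀ k, N ≤ k →
      ∫⁻ x in K, ENNReal.ofReal |f (s k) x - f (s 0) x - hmk x| ∂(μH[(0:ℝ)]) < ENNReal.ofReal ε := by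
    intro ε hε
    rw [Metric.tendsto_atTop] at hH
    obtain ⟨N, hN⟩ := hH ε hε
    refine ⟨N, fun k hk => ?_⟩
    have hd := hN k hk
    rw [hIeq k]
    have hne := Lp.eLpNorm_ne_top (φ k - H)
    have heq : dist (φ k) H = (eLpNorm (⇑(φ k - H)) 1 μ').toReal := by
      rw [Lp.dist_def]
      congr 1
      exact eLpNorm_congr_ae (Lp.coeFn_sub _ _).symm
    rw [heq] at hd
    calc eLpNorm (⇑(φ k - H)) 1 μ'
        = ENNReal.ofReal ((eLpNorm (⇑(φ k - H)) 1 μ').toReal) := (ENNReal.ofReal_toReal hne).symm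
      _ < ENNReal.ofReal ε := (ENNReal.ofReal_lt_ofReal_iff hε).2 hd
  -- the exceptional set E
  set E : Set ℝ := ⋃ (a : ℕ), ⋃ (b : ℕ), HD K (fun x => |f (s a) x - f (s b) x|) with hE
  have hEdim : dimH E = 0 := by
    rw [hE]
    simp only [dimH_iUnion]
    refine le_antisymm (iSup_le fun a => iSup_le fun b => ?_) zero_le
    exact le_of_eq (hN₁ (s a) (s b) (hsgt a) (hsgt b)).1
  have hEm : MeasurableSet E :=
    MeasurableSet.iUnion fun a => MeasurableSet.iUnion fun b =>
      measurableSet_HD hK ((hm _).sub (hm _)).abs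
  have hzero : ∀ k x, x ∈ K \ E → f (s k) x - f (s 0) x = 0 := by
    intro k x hx
    have hnot : x ∉ HD K (fun x => |f (s k) x - f (s 0) x|) := fun hmem =>
      hx.2 (Set.mem_iUnion.2 ⟨k, Set.mem_iUnion.2 ⟨0, hmem⟩⟩)
    by_contra hne
    exact hnot ⟨hx.1, by simpa [abs_ne_zero] using hne⟩
  have hmk0 : ∀ x ∈ K \ E, hmk x = 0 := by
    have hJ0 : ∫⁻ x in K \ E, ENNReal.ofReal |hmk x| ∂(μH[(0:ℝ)]) = 0 := by
      have hle : ∀ ε : NNReal, 0 < ε → (0:ℝ≥0∞) < ⊤ →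
          (∫⁻ x in K \ E, ENNReal.ofReal |hmk x| ∂(μH[(0:ℝ)])) ≤ 0 + ε := by
        intro ε hε _
        obtain ⟨N, hN⟩ := hconv ε (by exact_mod_cast hε)
        have h1 : ∫⁻ x in K \ E, ENNReal.ofReal |hmk x| ∂(μH[(0:ℝ)]) =
            ∫⁻ x in K \ E, ENNReal.ofReal |f (s N) x - f (s 0) x - hmk x| ∂(μH[(0:ℝ)]) := by
          refine setLIntegral_congr_fun (hK.diff hEm) (fun x hx => ?_)
          rw [hzero N x hx]
          norm_num
        rw [h1, zero_add]
        calc ∫⁻ x in K \ E, ENNReal.ofReal |f (s N) x - f (s 0) x - hmk x| ∂(μH[(0:ℝ)])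
            ≤ ∫⁻ x in K, ENNReal.ofReal |f (s N) x - f (s 0) x - hmk x| ∂(μH[(0:ℝ)]) :=
              lintegral_mono_set Set.diff_subset
          _ ≤ ENNReal.ofReal ε := (hN N le_rfl).le
          _ = ε := ENNReal.ofReal_coe_nnreal
      have := ENNReal.le_of_forall_pos_le_add hle
      simpa using this
    have hae := (lintegral_eq_zero_iff (hmkmeas.abs.ennreal_ofReal)).1 hJ0
    rw [Filter.EventuallyEq, ae_iff] at hae
    rw [Measure.restrict_apply' (hK.diff hEm)] at hae
    have hempty := mu0_null_iff hae
    intro x hx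
    by_contra hne
    have hxmem : x ∈ {a | ¬ ENNReal.ofReal |hmk a| = (0 : ℝ → ℝ≥0∞) a} ∩ (K \ E) := by
      refine ⟨?_, hx⟩
      simp only [Set.mem_setOf_eq, Pi.zero_apply, ENNReal.ofReal_eq_zero, not_le]
      exact abs_pos.2 hne
    rw [hempty] at hxmem
    exact hxmem
  -- the limit function
  set g : ℝ → ℝ := fun x => f (s 0) x + hmk x with hg
  have hgm : Measurable g := (hm (s 0)).add hmkmeas
  -- convergence
  have hlim : ∀ ε : ℝ, 0 < ε → ∃ N : ℕ, ∀ n : ℕ, N < n →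
      toLex (dLH K (f n) g) < toLex ((0 : ℝ≥0∞), (ε : EReal)) := by
    intro ε hε
    obtain ⟨M, hM⟩ := hconv ε hε
    refine ⟨N₁ + M + 1, fun n hn => ?_⟩
    set k := n - (N₁ + 1) with hk
    have hnk : n = s k := by simp only [hs, hk]; omega
    have hkM : M ≤ k := by omega
    have hrw : dLH K (f n) g = HInt K (fun x => |f n x - g x|) := rfl
    rw [hrw]
    apply (HInt_lt_iff hK (fun x => |f n x - g x|) ((hm n).sub hgm).abs
      (fun x => abs_nonneg _) hε).2
    constructor
    · refine le_antisymm (le_trans (dimH_mono ?_) hEdim.le) zero_le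
      intro x hx
      by_contra hxE
      have h0 := hmk0 x ⟨hx.1, hxE⟩
      have h1 := hzero k x ⟨hx.1, hxE⟩
      apply hx.2
      rw [hnk, hg]
      show |f (s k) x - (f (s 0) x + hmk x)| = 0
      rw [abs_eq_zero, h0]
      linarith
    · calc ∫⁻ x in K, ENNReal.ofReal |f n x - g x| ∂(μH[(0:ℝ)])
          = ∫⁻ x in K, ENNReal.ofReal |f (s k) x - f (s 0) x - hmk x| ∂(μH[(0:ℝ)]) := by
            refine lintegral_congr fun x => ?_
            rw [hnk, hg]
            congr 1
            congr 1
            ring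
        _ < ENNReal.ofReal ε := hM k hkM
  -- membership of g in L_H
  refine ⟨g, ⟨hgm, ?_, ?_⟩, hlim⟩
  · -- HIntPos finite
    have hEmk : ∀ x, x ∈ K → hmk x ≠ 0 → x ∈ E := by
      intro x hx1 hx2
      by_contra hxE
      exact hx2 (hmk0 x ⟨hx1, hxE⟩)
    have hDgsub : HD K (fun x => |g x|) ⊆ HD K (fun x => |f (s 0) x|) ∪ E := by
      intro x hx
      rcases eq_or_ne (hmk x) 0 with h0 | h0
      · refine Or.inl ⟨hx.1, fun habs => hx.2 ?_⟩
        have h1 : f (s 0) x = 0 := abs_eq_zero.1 habs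
        have h2 : g x = 0 := by rw [hg]; simp [h1, h0]
        show |g x| = 0
        rw [h2, abs_zero]
      · exact Or.inr (hEmk x hx.1 h0)
    have hDFsub : HD K (fun x => |f (s 0) x|) \ E ⊆ HD K (fun x => |g x|) := by
      intro x hx
      have h0 := hmk0 x ⟨hx.1.1, hx.2⟩
      refine ⟨hx.1.1, fun habs => hx.1.2 ?_⟩
      have h2 : g x = f (s 0) x := by rw [hg]; simp [h0]
      show |f (s 0) x| = 0
      rw [← h2]
      exact habs
    have hd1 : dimH (HD K (fun x => |g x|)) ≤ dimH (HD K (fun x => |f (s 0) x|)) := by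
      calc dimH (HD K (fun x => |g x|))
          ≤ dimH (HD K (fun x => |f (s 0) x|) ∪ E) := dimH_mono hDgsub
        _ = max (dimH (HD K (fun x => |f (s 0) x|))) (dimH E) := dimH_union _ _
        _ = dimH (HD K (fun x => |f (s 0) x|)) := by rw [hEdim]; exact max_eq_left zero_le
    have hd2 : dimH (HD K (fun x => |f (s 0) x|)) ≤ dimH (HD K (fun x => |g x|)) := by
      calc dimH (HD K (fun x => |f (s 0) x|))
          ≤ dimH ((HD K (fun x => |f (s 0) x|) \ E) ∪ E) := by
            refine dimH_mono fun x hx => ?_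
            by_cases hxE : x ∈ E
            · exact Or.inr hxE
            · exact Or.inl ⟨hx, hxE⟩
        _ = max (dimH (HD K (fun x => |f (s 0) x|) \ E)) (dimH E) := dimH_union _ _
        _ = dimH (HD K (fun x => |f (s 0) x|) \ E) := by rw [hEdim]; exact max_eq_left zero_le
        _ ≤ dimH (HD K (fun x => |g x|)) := dimH_mono hDFsub
    have hdd : dimH (HD K (fun x => |g x|)) = dimH (HD K (fun x => |f (s 0) x|)) :=
      le_antisymm hd1 hd2
    have hFfin : HIntPos K (fun x => |f (s 0) x|) ≠ ⊤ := (hf (s 0)).2.1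
    show HIntPos K (fun x => |g x|) ≠ ⊤
    have htgt : HIntPos K (fun x => |g x|) =
        ∫⁻ x in HD K (fun x => |g x|), ENNReal.ofReal |g x|
          ∂(μH[(dimH (HD K (fun x => |f (s 0) x|))).toReal]) := by
      show (∫⁻ x in HD K (fun x => |g x|), ENNReal.ofReal |g x|
          ∂(μH[(dimH (HD K (fun x => |g x|))).toReal])) = _
      rw [hdd]
    rw [htgt]
    by_cases hd0 : dimH (HD K (fun x => |f (s 0) x|)) = 0
    · rw [hd0, ENNReal.toReal_zero]
      have hA : (∫⁻ x in K, ENNReal.ofReal |f (s 0) x| ∂(μH[(0:ℝ)])) ≠ ⊤ := by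
        rw [← HIntPos_dim0 hK ((hm (s 0)).abs) hd0]
        exact hFfin
      have hB : (∫⁻ x in K, ENNReal.ofReal |hmk x| ∂(μH[(0:ℝ)])) ≠ ⊤ := by
        have heq : ∫⁻ x in K, ENNReal.ofReal |hmk x| ∂(μH[(0:ℝ)]) = eLpNorm hmk 1 μ' := by
          rw [eLpNorm_one_eq_lintegral_enorm, hμ']
          exact (lintegral_congr fun x => Real.enorm_eq_ofReal_abs _).symm
        rw [heq, ← eLpNorm_congr_ae hmk_ae]
        exact Lp.eLpNorm_ne_top H
      have hb : ∫⁻ x in HD K (fun x => |g x|), ENNReal.ofReal |g x| ∂(μH[(0:ℝ)])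
          ≤ (∫⁻ x in K, ENNReal.ofReal |f (s 0) x| ∂(μH[(0:ℝ)])) +
            (∫⁻ x in K, ENNReal.ofReal |hmk x| ∂(μH[(0:ℝ)])) := by
        calc ∫⁻ x in HD K (fun x => |g x|), ENNReal.ofReal |g x| ∂(μH[(0:ℝ)])
            ≤ ∫⁻ x in K, ENNReal.ofReal |g x| ∂(μH[(0:ℝ)]) :=
              lintegral_mono_set (fun x hx => hx.1)
          _ ≤ ∫⁻ x in K, (ENNReal.ofReal |f (s 0) x| + ENNReal.ofReal |hmk x|) ∂(μH[(0:ℝ)]) := by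
              refine lintegral_mono fun x => ?_
              calc ENNReal.ofReal |g x| ≤ ENNReal.ofReal (|f (s 0) x| + |hmk x|) := by
                    refine ENNReal.ofReal_le_ofReal ?_
                    rw [hg]
                    exact abs_add_le _ _
                _ ≤ _ := ENNReal.ofReal_add_le
          _ = _ := lintegral_add_left ((hm (s 0)).abs.ennreal_ofReal) _
      exact ne_top_of_le_ne_top (ENNReal.add_ne_top.2 ⟨hA, hB⟩) hb
    · have hdle : dimH (HD K (fun x => |f (s 0) x|)) ≤ 1 := by
        calc dimH (HD K (fun x => |f (s 0) x|))
            ≤ dimH (Set.univ : Set ℝ) := dimH_mono (Set.subset_univ _)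
          _ = 1 := Real.dimH_univ
      have hdtop : dimH (HD K (fun x => |f (s 0) x|)) ≠ ⊤ :=
        (lt_of_le_of_lt hdle ENNReal.one_lt_top).ne
      have hE0 : μH[(dimH (HD K (fun x => |f (s 0) x|))).toReal] E = 0 := by
        have h1 : dimH E < (((dimH (HD K (fun x => |f (s 0) x|))).toNNReal : ℝ≥0∞)) := by
          rw [hEdim]
          exact ENNReal.coe_pos.2 (ENNReal.toNNReal_pos hd0 hdtop)
        exact hausdorffMeasure_of_dimH_lt h1
      have hchain : (∫⁻ x in HD K (fun x => |g x|), ENNReal.ofReal |g x|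
          ∂(μH[(dimH (HD K (fun x => |f (s 0) x|))).toReal]))
          ≤ HIntPos K (fun x => |f (s 0) x|) := by
        calc ∫⁻ x in HD K (fun x => |g x|), ENNReal.ofReal |g x|
              ∂(μH[(dimH (HD K (fun x => |f (s 0) x|))).toReal])
            ≤ ∫⁻ x in (HD K (fun x => |g x|) \ E) ∪ E, ENNReal.ofReal |g x|
              ∂(μH[(dimH (HD K (fun x => |f (s 0) x|))).toReal]) := by
              refine lintegral_mono_set fun x hx => ?_
              by_cases hxE : x ∈ E
              · exact Or.inr hxE
              · exact Or.inl ⟨hx, hxE⟩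
          _ ≤ (∫⁻ x in HD K (fun x => |g x|) \ E, ENNReal.ofReal |g x|
              ∂(μH[(dimH (HD K (fun x => |f (s 0) x|))).toReal])) +
              (∫⁻ x in E, ENNReal.ofReal |g x|
              ∂(μH[(dimH (HD K (fun x => |f (s 0) x|))).toReal])) := lintegral_union_le _ _ _
          _ = ∫⁻ x in HD K (fun x => |g x|) \ E, ENNReal.ofReal |g x|
              ∂(μH[(dimH (HD K (fun x => |f (s 0) x|))).toReal]) := by
              rw [setLIntegral_measure_zero _ _ hE0, add_zero]
          _ = ∫⁻ x in HD K (fun x => |g x|) \ E, ENNReal.ofReal |f (s 0) x|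
              ∂(μH[(dimH (HD K (fun x => |f (s 0) x|))).toReal]) := by
              refine setLIntegral_congr_fun ((measurableSet_HD hK hgm.abs).diff hEm)
                (fun x hx => ?_)
              have h0 := hmk0 x ⟨hx.1.1, hx.2⟩
              have h2 : g x = f (s 0) x := by rw [hg]; simp [h0]
              rw [h2]
          _ ≤ ∫⁻ x in HD K (fun x => |f (s 0) x|), ENNReal.ofReal |f (s 0) x|
              ∂(μH[(dimH (HD K (fun x => |f (s 0) x|))).toReal]) := by
              refine lintegral_mono_set fun x hx => ?_
              have h0 := hmk0 x ⟨hx.1.1, hx.2⟩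
              refine ⟨hx.1.1, fun habs => hx.1.2 ?_⟩
              have h2 : g x = f (s 0) x := by rw [hg]; simp [h0]
              show |g x| = 0
              rw [h2]
              exact habs
          _ = HIntPos K (fun x => |f (s 0) x|) := rfl
      exact ne_top_of_le_ne_top hFfin hchain
  · rw [HIntNeg_eq_zero_s19 K _ (fun x => abs_nonneg _)]
    exact ENNReal.zero_ne_top
end
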